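/- arXiv:1801.07858 — 2 statements merged into one kernel-verified Lean document; each statement's English description precedes it below -/
import Mathlib

section
/- There exists a constant c'_d > 0 depending only on d such that the following holds. Let E be a positive integer which is a sum of d squares, λ = √E, and r_d(λ) = #{k ∈ ℤ^d : ‖k‖ = λ} > 0. Then for every a ∈ L²(𝕋^d) and every orthonormal basis (ψ_1, …, ψ_{r_d(λ)}) of the eigenspace V_E, one has (1/r_d(λ)) · ∑_i |∫_{𝕋^d} a|ψ_i|² dx − ∫_{𝕋^d} a dx|² ≤ ‖a‖²_{L²(𝕋^d)} · min{1, c'_d λ^{d−2}/r_d(λ)}. -/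
open MeasureTheory Real BigOperators ComplexConjugate

noncomputable section

instance : Fact (0 < 2 * π) := ⟨by positivity⟩

/-- The flat torus `𝕋^d = ℝ^d/(2πℤ)^d`. -/
abbrev Td (d : ℕ) := Fin d → AddCircle (2 * π)

/-- The normalized Haar probability measure on the flat torus. -/
def haarT (d : ℕ) : Measure (Td d) :=
  Measure.pi fun _ : Fin d => AddCircle.haarAddCircle

/-- The character `e_k(x) = e^{i⟨k,x⟩}` for `k ∈ ℤ^d`. -/
def eChar {d : ℕ} (k : Fin d → ℤ) (x : Td d) : ℂ := ∏ i, fourier (k i) (x i)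

/-- Euclidean norm of a lattice point of `ℤ^d`. -/
def znorm {d : ℕ} (k : Fin d → ℤ) : ℝ := Real.sqrt (∑ i, ((k i : ℝ)) ^ 2)

/-- The primitive lattice point `n̂` generating `n ≠ 0`: divide out the gcd of coordinates. -/
def primPart {d : ℕ} (n : Fin d → ℤ) : Fin d → ℤ := fun i => n i / Finset.univ.gcd n

/-- Fourier coefficient `â_n = ∫ a(x) e^{-i⟨n,x⟩} dx` of `a ∈ L²(𝕋^d)`. -/
def fcoef {d : ℕ} (a : Td d → ℂ) (n : Fin d → ℤ) : ℂ :=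
  ∫ x, a x * conj (eChar n x) ∂(haarT d)

/-- Fourier transform `μ̂(n) = ∫ e^{-i⟨n,x⟩} dμ(x)` of a measure on `𝕋^d`. -/
def muF {d : ℕ} (μ : Measure (Td d)) (n : Fin d → ℤ) : ℂ :=
  ∫ x, conj (eChar n x) ∂μ

/-- `N(λ) = #{k ∈ ℤ^d : ‖k‖ ≤ λ}`, the spectral counting function. -/
def latticeCount (d : ℕ) (lam : ℝ) : ℕ := Set.ncard {k : Fin d → ℤ | znorm k ≤ lam}

/-- An eigenbasis of `L²(𝕋^d)`: an orthonormal basis `(ψ_j)` of Laplace eigenfunctions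
`ψ_j = ∑_{‖k‖ = Λ j} c_j(k) e_k`, with nondecreasing eigenvalues `(Λ j)²` (nonnegative
integers), orthonormality and completeness expressed via the Fourier coefficients. -/
structure Eigenbasis (d : ℕ) where
  ψ : ℕ → Td d → ℂ
  Λ : ℕ → ℝ
  c : ℕ → (Fin d → ℤ) → ℂ
  nonneg : ∀ j, 0 ≤ Λ j
  mono : Monotone Λ
  eig_int : ∀ j, ∃ E : ℕ, Λ j ^ 2 = E
  repr : ∀ j x, ψ j x = ∑' k : Fin d → ℤ, c j k * eChar k x
  supp : ∀ j k, c j k ≠ 0 → znorm k = Λ j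
  ortho : ∀ i j, ∑' k : Fin d → ℤ, c i k * conj (c j k) = if i = j then 1 else 0
  complete : ∀ k l : Fin d → ℤ, ∑' j : ℕ, c j k * conj (c j l) = if k = l then 1 else 0

/-- A function on the torus is smooth if its `(2πℤ)^d`-periodic lift to `ℝ^d` is `C^∞`. -/
def SmoothOnTorus {d : ℕ} (a : Td d → ℂ) : Prop :=
  ContDiff ℝ (⊤ : ℕ∞) fun x : Fin d → ℝ => a fun i => (x i : AddCircle (2 * π))

section Aux

instance (d : ℕ) : IsProbabilityMeasure (haarT d) := by
  unfold haarT; infer_instance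

lemma eChar_continuous {d : ℕ} (k : Fin d → ℤ) : Continuous (eChar k) := by
  unfold eChar
  exact continuous_finset_prod _ fun i _ => (fourier (k i)).continuous.comp (continuous_apply i)

lemma eChar_norm {d : ℕ} (k : Fin d → ℤ) (x : Td d) : ‖eChar k x‖ = 1 := by
  unfold eChar
  rw [norm_prod]
  simp [Circle.norm_coe]

lemma eChar_zero {d : ℕ} (x : Td d) : eChar 0 x = 1 := by
  unfold eChar; simp [fourier_zero]

lemma eChar_mul_conj {d : ℕ} (k l : Fin d → ℤ) (x : Td d) :
    eChar k x * conj (eChar l x) = eChar (k - l) x := by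
  unfold eChar
  rw [map_prod, ← Finset.prod_mul_distrib]
  apply Finset.prod_congr rfl
  intro i _
  rw [← fourier_neg, ← fourier_add, Pi.sub_apply, sub_eq_add_neg]

lemma integral_fourier_haar (n : ℤ) :
    ∫ x : AddCircle (2 * π), fourier n x ∂(AddCircle.haarAddCircle) = if n = 0 then 1 else 0 := by
  split_ifs with h
  · subst h
    have : ⇑(fourier (T := 2 * π) 0) = (fun _ => 1 : AddCircle (2 * π) → ℂ) := by
      ext1; exact fourier_zero
    rw [this, integral_const, probReal_univ, one_smul]
  · exact integral_eq_zero_of_add_right_eq_neg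
      (fourier_add_half_inv_index h (by positivity))

lemma integral_eChar {d : ℕ} (m : Fin d → ℤ) :
    ∫ x, eChar m x ∂(haarT d) = if m = 0 then 1 else 0 := by
  unfold eChar haarT
  letI : MeasureSpace (AddCircle (2 * π)) := ⟨AddCircle.haarAddCircle⟩
  haveI : SigmaFinite (volume : Measure (AddCircle (2 * π))) :=
    (inferInstance : SigmaFinite (AddCircle.haarAddCircle (T := 2 * π)))
  rw [show (∫ x : Td d, ∏ i, fourier (m i) (x i) ∂(Measure.pi fun _ => AddCircle.haarAddCircle))
      = ∏ i, ∫ t, fourier (m i) t ∂(AddCircle.haarAddCircle) from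
    MeasureTheory.integral_fintype_prod_eq_prod (ι := Fin d)
      (f := fun i (t : AddCircle (2 * π)) => fourier (m i) t)]
  simp_rw [integral_fourier_haar]
  by_cases h : m = 0
  · subst h; simp
  · rw [if_neg h]
    obtain ⟨i, hi⟩ := Function.ne_iff.mp h
    exact Finset.prod_eq_zero (Finset.mem_univ i) (by simpa using hi)

variable {d : ℕ}

lemma eChar_memLp (k : Fin d → ℤ) : MemLp (eChar k) 2 (haarT d) :=
  MemLp.of_bound (eChar_continuous k).aestronglyMeasurable 1
    (Filter.Eventually.of_forall fun x => (eChar_norm k x).le)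

def eCharLp (d : ℕ) (k : Fin d → ℤ) : Lp ℂ 2 (haarT d) := (eChar_memLp k).toLp

lemma integrable_mul_eChar {a : Td d → ℂ} (ha : MemLp a 2 (haarT d)) (n : Fin d → ℤ) :
    Integrable (fun x => a x * conj (eChar n x)) (haarT d) := by
  have h : Integrable (fun x => conj (eChar n x) * a x) (haarT d) :=
    (ha.integrable (by norm_num)).bdd_mul
      ((continuous_star.comp (eChar_continuous n)).aestronglyMeasurable)
      (c := 1) (Filter.Eventually.of_forall fun x => le_of_eq (by rw [RCLike.norm_conj]; exact eChar_norm n x))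
  simpa [mul_comm] using h

lemma coeFn_eCharLp (n : Fin d → ℤ) : (eCharLp d n : Td d → ℂ) =ᵐ[haarT d] eChar n :=
  MemLp.coeFn_toLp _

lemma inner_eCharLp {a : Td d → ℂ} (ha : MemLp a 2 (haarT d)) (n : Fin d → ℤ) :
    (inner ℂ (eCharLp d n) (ha.toLp a) : ℂ) = ∫ x, a x * conj (eChar n x) ∂(haarT d) := by
  rw [MeasureTheory.L2.inner_def]
  have h1 := MemLp.coeFn_toLp ha
  have h2 := coeFn_eCharLp (d := d) n
  refine integral_congr_ae ?_
  filter_upwards [h1, h2] with x hx1 hx2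
  rw [hx1, hx2, RCLike.inner_apply', mul_comm]

lemma orthonormal_eCharLp : Orthonormal ℂ (eCharLp d) := by
  rw [orthonormal_iff_ite]
  intro k l
  rw [MeasureTheory.L2.inner_def]
  have h2 := coeFn_eCharLp (d := d) k
  have h3 := coeFn_eCharLp (d := d) l
  have : ∫ x, (inner ℂ ((eCharLp d k : Td d →₂[haarT d] ℂ) x) ((eCharLp d l : Td d →₂[haarT d] ℂ) x) : ℂ) ∂(haarT d)
      = ∫ x, eChar (l - k) x ∂(haarT d) := by
    refine integral_congr_ae ?_
    filter_upwards [h2, h3] with x hx2 hx3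
    rw [hx2, hx3, RCLike.inner_apply', mul_comm, eChar_mul_conj]
  rw [this, integral_eChar]
  by_cases h : k = l <;> simp [h, sub_eq_zero, eq_comm]

lemma norm_toLp_sq {a : Td d → ℂ} (ha : MemLp a 2 (haarT d)) :
    ‖ha.toLp‖ ^ 2 = ∫ x, ‖a x‖ ^ 2 ∂(haarT d) := by
  rw [← inner_self_eq_norm_sq (𝕜 := ℂ)]
  rw [MeasureTheory.L2.inner_def]
  have h1 := MemLp.coeFn_toLp ha
  have : ∫ x, (inner ℂ ((ha.toLp : Td d →₂[haarT d] ℂ) x) ((ha.toLp : Td d →₂[haarT d] ℂ) x) : ℂ) ∂(haarT d)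
      = ∫ x, (RCLike.ofReal (K := ℂ) (‖a x‖ ^ 2)) ∂(haarT d) := by
    refine integral_congr_ae ?_
    filter_upwards [h1] with x hx
    rw [hx, RCLike.inner_apply', RCLike.conj_mul]
    norm_num
  rw [this, integral_ofReal]
  simp

lemma bessel_fcoef {a : Td d → ℂ} (ha : MemLp a 2 (haarT d)) (T : Finset (Fin d → ℤ)) :
    ∑ n ∈ T, ‖∫ x, a x * conj (eChar n x) ∂(haarT d)‖ ^ 2 ≤ ∫ x, ‖a x‖ ^ 2 ∂(haarT d) := by
  have h := orthonormal_eCharLp (d := d) |>.sum_inner_products_le (s := T) ha.toLp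
  rw [norm_toLp_sq ha] at h
  refine le_trans (le_of_eq ?_) h
  refine Finset.sum_congr rfl fun n _ => ?_
  rw [inner_eCharLp ha n]

lemma eChar_conj (m : Fin d → ℤ) (x : Td d) : conj (eChar m x) = eChar (-m) x := by
  have h := eChar_mul_conj 0 m x
  rw [eChar_zero, one_mul] at h
  rw [h]
  congr 1
  simp

lemma norm_sq_cast (z : ℂ) : ((‖z‖ ^ 2 : ℝ) : ℂ) = z * conj z := by
  rw [Complex.mul_conj]
  norm_cast
  rw [← Complex.sq_norm]

lemma integral_mul_sq_norm_eq {a : Td d → ℂ} (ha : MemLp a 2 (haarT d))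
    (S : Finset (Fin d → ℤ)) (cc : (Fin d → ℤ) → ℂ) (ψf : Td d → ℂ)
    (hψ : ∀ x, ψf x = ∑ k ∈ S, cc k * eChar k x) :
    ∫ x, a x * ((‖ψf x‖ ^ 2 : ℝ) : ℂ) ∂(haarT d)
      = ∑ p ∈ S ×ˢ S, cc p.1 * conj (cc p.2)
          * ∫ x, a x * conj (eChar (p.2 - p.1) x) ∂(haarT d) := by
  have hpt : ∀ x, a x * ((‖ψf x‖ ^ 2 : ℝ) : ℂ)
      = ∑ p ∈ S ×ˢ S, cc p.1 * conj (cc p.2) * (a x * conj (eChar (p.2 - p.1) x)) := by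
    intro x
    rw [norm_sq_cast, hψ x, map_sum, Finset.sum_mul_sum, Finset.mul_sum, Finset.sum_product]
    refine Finset.sum_congr rfl fun k _ => ?_
    rw [Finset.mul_sum]
    refine Finset.sum_congr rfl fun l _ => ?_
    show a x * (cc k * eChar k x * conj (cc l * eChar l x))
        = cc k * conj (cc l) * (a x * conj (eChar (l - k) x))
    have h2 : conj (eChar (l - k) x) = eChar k x * conj (eChar l x) := by
      rw [eChar_mul_conj, eChar_conj, neg_sub]
    rw [h2, map_mul]
    ring
  rw [integral_congr_ae (Filter.Eventually.of_forall hpt)]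
  rw [integral_finset_sum]
  · exact Finset.sum_congr rfl fun p _ => MeasureTheory.integral_const_mul _ _
  · intro p _
    exact (integrable_mul_eChar ha (p.2 - p.1)).const_mul _

variable {d : ℕ}

lemma znorm_sq (k : Fin d → ℤ) : znorm k ^ 2 = ∑ i, ((k i : ℝ)) ^ 2 :=
  Real.sq_sqrt (by positivity)

lemma znorm_sq_eq_iff (k : Fin d → ℤ) (E : ℕ) :
    znorm k ^ 2 = E ↔ ∑ i, (k i) ^ 2 = (E : ℤ) := by
  rw [znorm_sq]
  constructor
  · intro h
    exact_mod_cast h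
  · intro h
    exact_mod_cast congrArg (Int.cast : ℤ → ℝ) h

/-- The sphere of radius √E in ℤ^d as a Finset. -/
def sphereSet (d E : ℕ) : Finset (Fin d → ℤ) :=
  (Finset.Icc (fun _ => -(E : ℤ)) (fun _ => (E : ℤ))).filter (fun k => ∑ i, (k i) ^ 2 = (E : ℤ))

lemma mem_sphereSet {E : ℕ} {k : Fin d → ℤ} :
    k ∈ sphereSet d E ↔ ∑ i, (k i) ^ 2 = (E : ℤ) := by
  unfold sphereSet
  rw [Finset.mem_filter, Finset.mem_Icc]
  constructor
  · exact fun h => h.2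
  · intro h
    refine ⟨⟨fun i => ?_, fun i => ?_⟩, h⟩
    · have h1 : (k i) ^ 2 ≤ (E : ℤ) := by
        rw [← h]
        exact Finset.single_le_sum (f := fun i => (k i)^2) (fun j _ => sq_nonneg _) (Finset.mem_univ i)
      show -(E:ℤ) ≤ k i
      nlinarith [sq_nonneg (k i + E), Int.natCast_nonneg E]
    · have h1 : (k i) ^ 2 ≤ (E : ℤ) := by
        rw [← h]
        exact Finset.single_le_sum (f := fun i => (k i)^2) (fun j _ => sq_nonneg _) (Finset.mem_univ i)
      show k i ≤ (E:ℤ)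
      nlinarith [sq_nonneg (k i - E), Int.natCast_nonneg E]

lemma sphereSet_coe (E : ℕ) : {k : Fin d → ℤ | znorm k ^ 2 = E} = ↑(sphereSet d E) := by
  ext k
  simp [mem_sphereSet, znorm_sq_eq_iff]

lemma line_circle_three (a b B x1 y1 x2 y2 x3 y3 : ℤ) (ha : a ≠ 0)
    (c2 : x2 ^ 2 + y2 ^ 2 = x1 ^ 2 + y1 ^ 2) (c3 : x3 ^ 2 + y3 ^ 2 = x1 ^ 2 + y1 ^ 2)
    (l1 : a * x1 + b * y1 = B) (l2 : a * x2 + b * y2 = B) (l3 : a * x3 + b * y3 = B) :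
    (x1 = x2 ∧ y1 = y2) ∨ (x1 = x3 ∧ y1 = y3) ∨ (x2 = x3 ∧ y2 = y3) := by
  set A : ℤ := x1 ^ 2 + y1 ^ 2 with hA
  have e1 : a ^ 2 * (A - y1 ^ 2) = (B - b * y1) ^ 2 := by
    linear_combination (a * x1 + B - b * y1) * l1
  have e2 : a ^ 2 * (A - y2 ^ 2) = (B - b * y2) ^ 2 := by
    linear_combination (-(a ^ 2)) * c2 + (a * x2 + B - b * y2) * l2
  have e3 : a ^ 2 * (A - y3 ^ 2) = (B - b * y3) ^ 2 := by
    linear_combination (-(a ^ 2)) * c3 + (a * x3 + B - b * y3) * l3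
  have key : ∀ y y' : ℤ, a ^ 2 * (A - y ^ 2) = (B - b * y) ^ 2 →
      a ^ 2 * (A - y' ^ 2) = (B - b * y') ^ 2 → y ≠ y' →
      (a ^ 2 + b ^ 2) * (y + y') = 2 * B * b := by
    intro y y' e e' hne
    have h : (y - y') * ((a ^ 2 + b ^ 2) * (y + y') - 2 * B * b) = 0 := by
      linear_combination e' - e
    rcases mul_eq_zero.mp h with h | h
    · exact absurd (sub_eq_zero.mp h) hne
    · linarith
  have hx : ∀ y y' x x' : ℤ, y = y' → a * x + b * y = B → a * x' + b * y' = B → x = x' := by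
    intro y y' x x' hyy lx lx'
    apply mul_left_cancel₀ ha
    subst hyy
    linarith
  by_cases h12 : y1 = y2
  · exact Or.inl ⟨hx _ _ _ _ h12 l1 l2, h12⟩
  by_cases h13 : y1 = y3
  · exact Or.inr (Or.inl ⟨hx _ _ _ _ h13 l1 l3, h13⟩)
  by_cases h23 : y2 = y3
  · exact Or.inr (Or.inr ⟨hx _ _ _ _ h23 l2 l3, h23⟩)
  · exfalso
    have k2 := key y1 y2 e1 e2 h12
    have k3 := key y1 y3 e1 e3 h13
    have hab : 0 < a ^ 2 + b ^ 2 := by positivity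
    have : (a ^ 2 + b ^ 2) * (y2 - y3) = 0 := by linarith
    rcases mul_eq_zero.mp this with h | h
    · omega
    · exact h23 (by linarith)

lemma sphere_fiber_card_le (hd : 2 ≤ d) (E : ℕ) {n : Fin d → ℤ} (hn : n ≠ 0) :
    ((sphereSet d E).filter (fun k => k + n ∈ sphereSet d E)).card
      ≤ 2 * (2 * Nat.sqrt E + 1) ^ (d - 2) := by
  classical
  obtain ⟨i, hi⟩ := Function.ne_iff.mp hn
  have hi : n i ≠ 0 := by simpa using hi
  have hcard : 1 < Fintype.card (Fin d) := by
    rw [Fintype.card_fin]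
    omega
  obtain ⟨i', hi'⟩ := Fintype.exists_ne_of_one_lt_card hcard i
  set M := Nat.sqrt E with hM
  set u : Finset (Fin d) := (Finset.univ.erase i').erase i with hu
  have hmemu : ∀ j, j ∈ u ↔ (j ≠ i ∧ j ≠ i') := by
    intro j; simp [hu, and_comm]
  have hsplit : ∀ f : Fin d → ℤ, ∑ j, f j = f i + f i' + ∑ j ∈ u, f j := by
    intro f
    rw [hu]
    have h1 : i ∈ Finset.univ.erase i' := Finset.mem_erase.mpr ⟨fun h => hi' (h ▸ rfl), Finset.mem_univ i⟩
    rw [← Finset.add_sum_erase _ f (Finset.mem_univ i'), ← Finset.add_sum_erase _ f h1]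
    ring
  set K := (sphereSet d E).filter (fun k => k + n ∈ sphereSet d E) with hK
  set φ : (Fin d → ℤ) → (Fin d → ℤ) := fun k j => if j = i ∨ j = i' then 0 else k j with hφ
  set B : Finset (Fin d → ℤ) := Fintype.piFinset
    (fun j => if j = i ∨ j = i' then ({0} : Finset ℤ) else Finset.Icc (-(M:ℤ)) (M:ℤ)) with hB
  have hEM : (E : ℤ) < ((M : ℤ) + 1) ^ 2 := by
    have := Nat.lt_succ_sqrt' E
    push_cast [hM]
    nlinarith [this]
  have himg : ∀ k ∈ K, φ k ∈ B := by
    intro k hk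
    rw [Fintype.mem_piFinset]
    intro j
    by_cases hj : j = i ∨ j = i'
    · simp [hφ, hj]
    · have hkS : k ∈ sphereSet d E := (Finset.mem_filter.mp hk).1
      have hsq : (k j) ^ 2 ≤ (E : ℤ) := by
        rw [← mem_sphereSet.mp hkS]
        exact Finset.single_le_sum (f := fun i => (k i)^2) (fun j _ => sq_nonneg _) (Finset.mem_univ j)
      simp only [hφ, hj, if_false, hB, Finset.mem_Icc]
      constructor
      · nlinarith [hsq, hEM]
      · nlinarith [hsq, hEM]
  have hfiber : ∀ b ∈ K.image φ, (K.filter (fun k => φ k = b)).card ≤ 2 := by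
    intro b _
    by_contra hgt
    push_neg at hgt
    rw [Finset.two_lt_card_iff] at hgt
    obtain ⟨k1, k2, k3, m1, m2, m3, h12, h13, h23⟩ := hgt
    have unpack : ∀ k, k ∈ K.filter (fun k => φ k = b) →
        (∑ j, (k j) ^ 2 = (E:ℤ)) ∧ (∑ j, (k j + n j) ^ 2 = (E:ℤ)) ∧
          (∀ j, j ≠ i → j ≠ i' → k j = b j) := by
      intro k hk
      rw [Finset.mem_filter] at hk
      obtain ⟨hk1, hk2⟩ := hk
      rw [hK, Finset.mem_filter] at hk1
      refine ⟨mem_sphereSet.mp hk1.1, by simpa using mem_sphereSet.mp hk1.2, fun j hj1 hj2 => ?_⟩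
      have := congrFun hk2 j
      simpa [hφ, hj1, hj2] using this
    obtain ⟨S1, P1, O1⟩ := unpack k1 m1
    obtain ⟨S2, P2, O2⟩ := unpack k2 m2
    obtain ⟨S3, P3, O3⟩ := unpack k3 m3
    have hout : ∀ k k' : Fin d → ℤ, (∀ j, j ≠ i → j ≠ i' → k j = b j) → (∀ j, j ≠ i → j ≠ i' → k' j = b j) →
        ∀ j, j ∈ u → k j = k' j := by
      intro k k' hk hk' j hj
      obtain ⟨hj1, hj2⟩ := (hmemu j).mp hj
      rw [hk j hj1 hj2, hk' j hj1 hj2]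
    -- circle equations
    have circ : ∀ k k' : Fin d → ℤ, (∑ j, (k j) ^ 2 = (E:ℤ)) → (∑ j, (k' j) ^ 2 = (E:ℤ)) →
        (∀ j, j ∈ u → k j = k' j) →
        k i ^ 2 + k i' ^ 2 = k' i ^ 2 + k' i' ^ 2 := by
      intro k k' hk hk' ho
      have e1 := hsplit (fun j => (k j) ^ 2)
      have e2 := hsplit (fun j => (k' j) ^ 2)
      have : ∑ j ∈ u, (k j) ^ 2 = ∑ j ∈ u, (k' j) ^ 2 :=
        Finset.sum_congr rfl (fun j hj => by rw [ho j hj])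
      omega
    -- expansion
    have hexp : ∀ k : Fin d → ℤ, ∑ j, (k j + n j) ^ 2
        = ∑ j, (k j) ^ 2 + 2 * ∑ j, k j * n j + ∑ j, (n j) ^ 2 := by
      intro k
      rw [Finset.mul_sum, ← Finset.sum_add_distrib, ← Finset.sum_add_distrib]
      exact Finset.sum_congr rfl (fun j _ => by ring)
    have hQ : ∀ k k' : Fin d → ℤ, (∑ j, (k j) ^ 2 = (E:ℤ)) → (∑ j, (k' j) ^ 2 = (E:ℤ)) →
        (∑ j, (k j + n j) ^ 2 = (E:ℤ)) → (∑ j, (k' j + n j) ^ 2 = (E:ℤ)) →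
        ∑ j, k j * n j = ∑ j, k' j * n j := by
      intro k k' h1 h2 h3 h4
      have e1 := hexp k
      have e2 := hexp k'
      omega
    have lin : ∀ k k' : Fin d → ℤ, (∀ j, j ∈ u → k j = k' j) → (∑ j, k j * n j = ∑ j, k' j * n j) →
        n i * k i + n i' * k i' = n i * k' i + n i' * k' i' := by
      intro k k' ho hq
      have e1 := hsplit (fun j => k j * n j)
      have e2 := hsplit (fun j => k' j * n j)
      have : ∑ j ∈ u, k j * n j = ∑ j ∈ u, k' j * n j :=
        Finset.sum_congr rfl (fun j hj => by rw [ho j hj])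
      nlinarith [e1, e2, hq, this]
    have ho12 := hout k2 k1 O2 O1
    have ho13 := hout k3 k1 O3 O1
    have c2 := circ k2 k1 S2 S1 ho12
    have c3 := circ k3 k1 S3 S1 ho13
    have q2 := lin k2 k1 ho12 (hQ k2 k1 S2 S1 P2 P1)
    have q3 := lin k3 k1 ho13 (hQ k3 k1 S3 S1 P3 P1)
    set Bc : ℤ := n i * k1 i + n i' * k1 i' with hBc
    have key := line_circle_three (n i) (n i') Bc (k1 i) (k1 i') (k2 i) (k2 i') (k3 i) (k3 i')
      hi c2 c3 rfl q2 q3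
    have ext_eq : ∀ k k' : Fin d → ℤ, (∀ j, j ≠ i → j ≠ i' → k j = b j) → (∀ j, j ≠ i → j ≠ i' → k' j = b j) →
        k i = k' i → k i' = k' i' → k = k' := by
      intro k k' hk hk' he1 he2
      funext j
      by_cases hj1 : j = i
      · rw [hj1]; exact he1
      by_cases hj2 : j = i'
      · rw [hj2]; exact he2
      · rw [hk j hj1 hj2, hk' j hj1 hj2]
    rcases key with ⟨e1, e2⟩ | ⟨e1, e2⟩ | ⟨e1, e2⟩
    · exact h12 (ext_eq k1 k2 O1 O2 e1 e2)
    · exact h13 (ext_eq k1 k3 O1 O3 e1 e2)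
    · exact h23 (ext_eq k2 k3 O2 O3 e1 e2)
  have hcard1 : K.card ≤ 2 * (K.image φ).card := Finset.card_le_mul_card_image K 2 hfiber
  have hcard2 : (K.image φ).card ≤ B.card :=
    Finset.card_le_card (Finset.image_subset_iff.mpr himg)
  have hcardB : B.card = (2 * M + 1) ^ (d - 2) := by
    rw [hB, Fintype.card_piFinset]
    have hc : ∀ j : Fin d, ((if j = i ∨ j = i' then ({0} : Finset ℤ) else Finset.Icc (-(M:ℤ)) (M:ℤ))).card
        = if j = i ∨ j = i' then 1 else (2 * M + 1) := by
      intro j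
      by_cases hj : j = i ∨ j = i' <;> simp [hj, Int.card_Icc]
      omega
    rw [Finset.prod_congr rfl (fun j _ => hc j), Finset.prod_ite, Finset.prod_const,
      Finset.prod_const, one_pow, one_mul]
    congr 1
    have : Finset.univ.filter (fun j => ¬(j = i ∨ j = i')) = u := by
      ext j; simp [hmemu, hu, and_comm]
    rw [this, hu, Finset.card_erase_of_mem, Finset.card_erase_of_mem (Finset.mem_univ i')]
    · simp only [Finset.card_univ, Fintype.card_fin]
      omega
    · exact Finset.mem_erase.mpr ⟨fun h => hi' (h ▸ rfl), Finset.mem_univ i⟩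
  calc K.card ≤ 2 * (K.image φ).card := hcard1
    _ ≤ 2 * B.card := by omega
    _ = 2 * (2 * M + 1) ^ (d - 2) := by rw [hcardB]

lemma pair_fiber_card_eq (E : ℕ) (n : Fin d → ℤ) :
    (((sphereSet d E) ×ˢ (sphereSet d E)).filter (fun p => p.2 - p.1 = n)).card
      = ((sphereSet d E).filter (fun k => k + n ∈ sphereSet d E)).card := by
  apply Finset.card_bij' (fun p _ => p.1) (fun k _ => (k, k + n))
  · intro p hp
    rw [Finset.mem_filter] at hp ⊢
    obtain ⟨hp1, hp2⟩ := hp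
    rw [Finset.mem_product] at hp1
    refine ⟨hp1.1, ?_⟩
    have : p.2 = p.1 + n := by rw [← hp2]; ring
    rw [← this]
    exact hp1.2
  · intro k hk
    rw [Finset.mem_filter] at hk ⊢
    refine ⟨Finset.mem_product.mpr ⟨hk.1, hk.2⟩, by ring⟩
  · intro p hp
    rw [Finset.mem_filter] at hp
    have : p.2 = p.1 + n := by rw [← hp.2]; ring
    exact Prod.ext rfl this.symm
  · intro k _
    rfl

lemma pair_fiber_card_le_real (hd : 2 ≤ d) {E : ℕ} (hE : 0 < E) {n : Fin d → ℤ} (hn : n ≠ 0) :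
    ((((sphereSet d E) ×ˢ (sphereSet d E)).filter (fun p => p.2 - p.1 = n)).card : ℝ)
      ≤ min ((sphereSet d E).card : ℝ) (2 * 3 ^ (d - 2) * Real.sqrt E ^ (d - 2)) := by
  rw [pair_fiber_card_eq]
  refine le_min ?_ ?_
  · exact_mod_cast Nat.cast_le.mpr (Finset.card_filter_le _ _)
  · refine le_trans (Nat.cast_le.mpr (sphere_fiber_card_le hd E hn)) ?_
    push_cast
    have hM1 : 1 ≤ Nat.sqrt E := by
      rw [Nat.one_le_iff_ne_zero, Ne, Nat.sqrt_eq_zero]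
      omega
    have hMr : (Nat.sqrt E : ℝ) ≤ Real.sqrt E := by
      rw [show ((Nat.sqrt E : ℕ) : ℝ) = Real.sqrt (((Nat.sqrt E : ℕ) : ℝ) ^ 2) from
        (Real.sqrt_sq (by positivity)).symm]
      refine Real.sqrt_le_sqrt ?_
      exact_mod_cast Nat.sqrt_le' E
    have h1 : (2 * Nat.sqrt E + 1 : ℝ) ≤ 3 * Real.sqrt E := by
      have : (1 : ℝ) ≤ (Nat.sqrt E : ℝ) := by exact_mod_cast hM1
      nlinarith
    calc (2 : ℝ) * (2 * Nat.sqrt E + 1) ^ (d - 2)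
        ≤ 2 * (3 * Real.sqrt E) ^ (d - 2) :=
          mul_le_mul_of_nonneg_left (pow_le_pow_left₀ (by positivity) h1 (d - 2)) (by norm_num)
      _ = 2 * 3 ^ (d - 2) * Real.sqrt E ^ (d - 2) := by rw [mul_pow]; ring

end Aux

/-- quantum variance on an individual eigenspace, normalized by its dimension. -/
theorem statement8 (d : ℕ) (hd : 2 ≤ d) :
    ∃ c' : ℝ, 0 < c' ∧ ∀ E : ℕ, 0 < E →
      ∀ r : ℕ, r = Set.ncard {k : Fin d → ℤ | znorm k ^ 2 = E} → 0 < r →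
      ∀ a : Td d → ℂ, MemLp a 2 (haarT d) →
      ∀ (ψ : Fin r → Td d → ℂ) (c : Fin r → (Fin d → ℤ) → ℂ),
        (∀ i k, c i k ≠ 0 → znorm k ^ 2 = E) →
        (∀ i x, ψ i x = ∑' k : Fin d → ℤ, c i k * eChar k x) →
        (∀ i j, ∑' k : Fin d → ℤ, c i k * conj (c j k) = if i = j then 1 else 0) →
        (∀ k l : Fin d → ℤ, znorm k ^ 2 = E → znorm l ^ 2 = E →
          ∑ i, c i k * conj (c i l) = if k = l then 1 else 0) →
        (1 / (r : ℝ)) *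
            ∑ i, ‖(∫ x, a x * ((‖ψ i x‖ ^ 2 : ℝ) : ℂ) ∂(haarT d)) - ∫ x, a x ∂(haarT d)‖ ^ 2
          ≤ (∫ x, ‖a x‖ ^ 2 ∂(haarT d)) * min 1 (c' * Real.sqrt E ^ (d - 2) / r) := by
  classical
  refine ⟨2 * 3 ^ (d - 2), by positivity, ?_⟩
  intro E hE r hr hrpos a ha ψ c hsupp hψ hortho _hcomp
  set S := sphereSet d E with hS
  set F : (Fin d → ℤ) → ℂ := fun n => ∫ x, a x * conj (eChar n x) ∂(haarT d) with hF
  have hrS : r = S.card := by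
    rw [hr, sphereSet_coe, Set.ncard_coe_finset]
  have hzero : ∀ i k, k ∉ S → c i k = 0 := by
    intro i k hk
    by_contra h
    exact hk (mem_sphereSet.mpr ((znorm_sq_eq_iff k E).mp (hsupp i k h)))
  have hsum : ∀ i x, ψ i x = ∑ k ∈ S, c i k * eChar k x := by
    intro i x
    rw [hψ i x]
    exact tsum_eq_sum (fun k hk => by rw [hzero i k hk, zero_mul])
  have horthoS : ∀ i j, ∑ k ∈ S, c i k * conj (c j k) = if i = j then 1 else 0 := by
    intro i j
    rw [← hortho i j]
    exact (tsum_eq_sum (fun k hk => by rw [hzero i k hk, zero_mul])).symm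
  have hid : ∀ i, ∫ x, a x * ((‖ψ i x‖ ^ 2 : ℝ) : ℂ) ∂(haarT d)
      = ∑ p ∈ S ×ˢ S, c i p.1 * conj (c i p.2) * F (p.2 - p.1) :=
    fun i => integral_mul_sq_norm_eq ha S (c i) (ψ i) (hsum i)
  have hF0 : ∫ x, a x ∂(haarT d) = F 0 := by
    rw [hF]
    refine integral_congr_ae (Filter.Eventually.of_forall fun x => ?_)
    show a x = a x * conj (eChar 0 x)
    rw [eChar_zero, map_one, mul_one]
  have hdiag : ∀ i, ∑ p ∈ S ×ˢ S, c i p.1 * conj (c i p.2) * (if p.1 = p.2 then F 0 else 0)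
      = F 0 := by
    intro i
    rw [Finset.sum_product]
    have h1 : ∀ k ∈ S, ∑ l ∈ S, c i k * conj (c i l) * (if k = l then F 0 else 0)
        = c i k * conj (c i k) * F 0 := by
      intro k hk
      rw [Finset.sum_congr rfl (fun l _ => by rw [mul_ite, mul_zero]),
        Finset.sum_ite_eq S k (fun l => c i k * conj (c i l) * F 0), if_pos hk]
    rw [Finset.sum_congr rfl h1, ← Finset.sum_mul, horthoS i i, if_pos rfl, one_mul]
  have hD : ∀ i, (∫ x, a x * ((‖ψ i x‖ ^ 2 : ℝ) : ℂ) ∂(haarT d)) - ∫ x, a x ∂(haarT d)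
      = ∑ p ∈ S ×ˢ S, c i p.1 * conj (c i p.2) * (if p.1 = p.2 then 0 else F (p.2 - p.1)) := by
    intro i
    rw [hid i, hF0, ← hdiag i, ← Finset.sum_sub_distrib]
    refine Finset.sum_congr rfl fun p _ => ?_
    by_cases h : p.1 = p.2
    · have h0 : p.2 - p.1 = 0 := by rw [h, sub_self]
      rw [if_pos h, if_pos h, h0, mul_zero, sub_self]
    · rw [if_neg h, if_neg h, mul_zero, sub_zero]
  -- Bessel on the eigenspace side
  set P := S ×ˢ S with hP
  set v : Fin r → EuclideanSpace ℂ {p // p ∈ P} :=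
    fun i => WithLp.toLp 2 fun p => conj (c i p.1.1) * c i p.1.2 with hv
  set A : EuclideanSpace ℂ {p // p ∈ P} :=
    WithLp.toLp 2 fun p => if p.1.1 = p.1.2 then 0 else F (p.1.2 - p.1.1) with hA
  have hinner : ∀ i, (inner ℂ (v i) A : ℂ)
      = ∑ p ∈ P, c i p.1 * conj (c i p.2) * (if p.1 = p.2 then 0 else F (p.2 - p.1)) := by
    intro i
    rw [PiLp.inner_apply]
    refine Eq.trans ?_ (Finset.sum_coe_sort P
      (fun p => c i p.1 * conj (c i p.2) * (if p.1 = p.2 then 0 else F (p.2 - p.1))))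
    refine Finset.sum_congr rfl fun p _ => ?_
    rw [RCLike.inner_apply', hv, hA]
    simp only [map_mul, Complex.conj_conj]
  have horthov : Orthonormal ℂ v := by
    rw [orthonormal_iff_ite]
    intro i j
    rw [PiLp.inner_apply]
    simp_rw [RCLike.inner_apply']
    have hcoe : ∑ p : {p // p ∈ P}, conj (v i p) * v j p
        = ∑ p ∈ P, conj (conj (c i p.1) * c i p.2) * (conj (c j p.1) * c j p.2) :=
      Finset.sum_coe_sort P
        (fun p => conj (conj (c i p.1) * c i p.2) * (conj (c j p.1) * c j p.2))
    rw [hcoe]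
    have hfact : ∑ p ∈ P, conj (conj (c i p.1) * c i p.2) * (conj (c j p.1) * c j p.2)
        = (∑ k ∈ S, c i k * conj (c j k)) * (∑ l ∈ S, conj (c i l) * c j l) := by
      rw [Finset.sum_mul_sum, hP, Finset.sum_product]
      refine Finset.sum_congr rfl fun k _ => Finset.sum_congr rfl fun l _ => ?_
      simp only [map_mul, Complex.conj_conj]
      ring
    have h2 : ∑ l ∈ S, conj (c i l) * c j l = conj (∑ k ∈ S, c i k * conj (c j k)) := by
      rw [map_sum]
      refine Finset.sum_congr rfl fun l _ => ?_
      simp only [map_mul, Complex.conj_conj]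
    rw [hfact, horthoS i j, h2, horthoS i j]
    by_cases h : i = j <;> simp [h]
  have hbessel := horthov.sum_inner_products_le (s := Finset.univ) A
  have hnormA : ‖A‖ ^ 2 = ∑ p ∈ P.filter (fun p => ¬ p.1 = p.2), ‖F (p.2 - p.1)‖ ^ 2 := by
    rw [EuclideanSpace.norm_eq, Real.sq_sqrt (by positivity)]
    have hcoe : ∑ p : {p // p ∈ P}, ‖A p‖ ^ 2
        = ∑ p ∈ P, ‖if p.1 = p.2 then (0 : ℂ) else F (p.2 - p.1)‖ ^ 2 :=
      Finset.sum_coe_sort P (fun p => ‖if p.1 = p.2 then (0 : ℂ) else F (p.2 - p.1)‖ ^ 2)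
    rw [hcoe, Finset.sum_filter]
    refine Finset.sum_congr rfl fun p _ => ?_
    by_cases h : p.1 = p.2 <;> simp [h]
  set T := (P.filter (fun p => ¬ p.1 = p.2)).image (fun p => p.2 - p.1) with hT
  have hTne : ∀ n ∈ T, n ≠ 0 := by
    intro n hn
    obtain ⟨p, hp, hpn⟩ := Finset.mem_image.mp hn
    have hp2 := (Finset.mem_filter.mp hp).2
    rw [← hpn]
    exact sub_ne_zero.mpr (fun h => hp2 h.symm)
  have hfib : ∑ p ∈ P.filter (fun p => ¬ p.1 = p.2), ‖F (p.2 - p.1)‖ ^ 2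
      = ∑ n ∈ T, ((P.filter (fun p => p.2 - p.1 = n)).card : ℝ) * ‖F n‖ ^ 2 := by
    rw [← Finset.sum_fiberwise_of_maps_to (g := fun p : (Fin d → ℤ) × (Fin d → ℤ) => p.2 - p.1)
      (fun p hp => Finset.mem_image_of_mem _ hp) (fun p => ‖F (p.2 - p.1)‖ ^ 2)]
    refine Finset.sum_congr rfl fun n hn => ?_
    have hset : (P.filter (fun p => ¬ p.1 = p.2)).filter (fun p => p.2 - p.1 = n)
        = P.filter (fun p => p.2 - p.1 = n) := by
      rw [Finset.filter_filter]
      refine Finset.filter_congr fun p hp => ?_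
      constructor
      · exact fun h => h.2
      · intro h
        exact ⟨fun he => (hTne n hn) (by rw [← h, he, sub_self]), h⟩
    rw [hset, Finset.sum_congr rfl (fun p hp => by rw [(Finset.mem_filter.mp hp).2]),
      Finset.sum_const, nsmul_eq_mul]
  set Mv : ℝ := min (r : ℝ) (2 * 3 ^ (d - 2) * Real.sqrt E ^ (d - 2)) with hMv
  have hMb : ∀ n ∈ T, ((P.filter (fun p => p.2 - p.1 = n)).card : ℝ) ≤ Mv := by
    intro n hn
    have := pair_fiber_card_le_real (d := d) hd hE (hTne n hn)
    rw [hMv, hrS]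
    exact_mod_cast this
  have hMv0 : 0 ≤ Mv := le_min (by positivity) (by positivity)
  set Q : ℝ := ∫ x, ‖a x‖ ^ 2 ∂(haarT d) with hQdef
  have hQ0 : 0 ≤ Q := integral_nonneg fun x => by positivity
  have hbT : ∑ n ∈ T, ‖F n‖ ^ 2 ≤ Q := by
    simpa only [hF, hQdef] using bessel_fcoef ha T
  have hcase : ∑ i, ‖(∫ x, a x * ((‖ψ i x‖ ^ 2 : ℝ) : ℂ) ∂(haarT d))
      - ∫ x, a x ∂(haarT d)‖ ^ 2 ≤ Mv * Q := by
    calc ∑ i, ‖(∫ x, a x * ((‖ψ i x‖ ^ 2 : ℝ) : ℂ) ∂(haarT d)) - ∫ x, a x ∂(haarT d)‖ ^ 2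
        = ∑ i, ‖(inner ℂ (v i) A : ℂ)‖ ^ 2 := by
          refine Finset.sum_congr rfl fun i _ => ?_
          rw [hD i, ← hinner i]
      _ ≤ ‖A‖ ^ 2 := hbessel
      _ = ∑ p ∈ P.filter (fun p => ¬ p.1 = p.2), ‖F (p.2 - p.1)‖ ^ 2 := hnormA
      _ = ∑ n ∈ T, ((P.filter (fun p => p.2 - p.1 = n)).card : ℝ) * ‖F n‖ ^ 2 := hfib
      _ ≤ ∑ n ∈ T, Mv * ‖F n‖ ^ 2 :=
          Finset.sum_le_sum fun n hn => mul_le_mul_of_nonneg_right (hMb n hn) (by positivity)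
      _ = Mv * ∑ n ∈ T, ‖F n‖ ^ 2 := by rw [Finset.mul_sum]
      _ ≤ Mv * Q := mul_le_mul_of_nonneg_left hbT hMv0
  have hrpos' : (0 : ℝ) < r := by exact_mod_cast hrpos
  calc (1 / (r : ℝ)) * ∑ i, ‖(∫ x, a x * ((‖ψ i x‖ ^ 2 : ℝ) : ℂ) ∂(haarT d))
        - ∫ x, a x ∂(haarT d)‖ ^ 2
      ≤ (1 / (r : ℝ)) * (Mv * Q) := mul_le_mul_of_nonneg_left hcase (by positivity)
    _ = Q * (Mv / r) := by ring
    _ = Q * min 1 (2 * 3 ^ (d - 2) * Real.sqrt E ^ (d - 2) / r) := by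
        rw [hMv, ← min_div_div_right (le_of_lt hrpos'), div_self (ne_of_gt hrpos')]
end
end

section
/- Let d ≥ 2 and α ≥ 0. There exists a constant C > 0 depending only on d and α such that for every λ ≥ 2, ∑_{n ∈ ℤ^d, 1 ≤ ‖n‖ ≤ λ} 1/(‖n̂‖ · ‖n‖^α) ≤ C (log λ)² λ^{max(d−1−α, 0)}. -/
open MeasureTheory Real BigOperators ComplexConjugate

noncomputable section

/- ### Auxiliary lemmas for statement11 -/

lemma znorm_nonneg' {d : ℕ} (k : Fin d → ℤ) : 0 ≤ znorm k := Real.sqrt_nonneg _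

lemma abs_le_znorm {d : ℕ} (k : Fin d → ℤ) (i : Fin d) : |(k i : ℝ)| ≤ znorm k := by
  rw [znorm, ← Real.sqrt_sq_eq_abs]
  exact Real.sqrt_le_sqrt <|
    Finset.single_le_sum (f := fun j => ((k j : ℝ)) ^ 2) (fun j _ => sq_nonneg _)
      (Finset.mem_univ i)

lemma one_le_znorm {d : ℕ} {k : Fin d → ℤ} (hk : k ≠ 0) : 1 ≤ znorm k := by
  obtain ⟨i, hi⟩ := Function.ne_iff.mp hk
  calc (1 : ℝ) ≤ |(k i : ℝ)| := by
        rw [← Int.cast_abs]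
        exact_mod_cast Int.one_le_abs (by simpa using hi)
    _ ≤ znorm k := abs_le_znorm k i

lemma znorm_zero' {d : ℕ} : znorm (0 : Fin d → ℤ) = 0 := by simp [znorm]

lemma znorm_smul {d : ℕ} (g : ℤ) (hg : 0 ≤ g) (p : Fin d → ℤ) :
    znorm (fun i => g * p i) = (g : ℝ) * znorm p := by
  have : ∑ i, (((g * p i : ℤ) : ℝ)) ^ 2 = (g : ℝ) ^ 2 * ∑ i, ((p i : ℝ)) ^ 2 := by
    rw [Finset.mul_sum]; push_cast; ring_nf
  rw [znorm, znorm, this, Real.sqrt_mul (sq_nonneg _), Real.sqrt_sq (by exact_mod_cast hg)]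

lemma gcd_facts {d : ℕ} {n : Fin d → ℤ} (hn : n ≠ 0) :
    1 ≤ Finset.univ.gcd n ∧ (∀ i, n i = Finset.univ.gcd n * primPart n i) ∧ primPart n ≠ 0 := by
  set g := Finset.univ.gcd n with hg
  have hgne : g ≠ 0 := by
    rw [hg, Ne, Finset.gcd_eq_zero_iff]
    intro h
    exact hn (funext fun i => h i (Finset.mem_univ i))
  have hg0 : 0 ≤ g := by
    calc (0:ℤ) ≤ |g| := abs_nonneg g
      _ = normalize g := Int.abs_eq_normalize g
      _ = g := Finset.normalize_gcd
  have hg1 : 1 ≤ g := lt_of_le_of_ne hg0 (Ne.symm hgne)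
  have heq : ∀ i, n i = g * primPart n i := fun i =>
    (Int.mul_ediv_cancel' (Finset.gcd_dvd (Finset.mem_univ i))).symm
  refine ⟨hg1, heq, ?_⟩
  intro hp
  apply hn
  funext i
  have := heq i
  rw [hp] at this
  simpa using this

lemma znorm_factor {d : ℕ} {n : Fin d → ℤ} (hn : n ≠ 0) :
    znorm n = (((Finset.univ.gcd n).toNat : ℕ) : ℝ) * znorm (primPart n) := by
  obtain ⟨hg1, heq, _⟩ := gcd_facts hn
  have h1 : znorm n = znorm (fun i => Finset.univ.gcd n * primPart n i) := by
    congr 1; funext i; exact heq i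
  rw [h1, znorm_smul _ (by linarith) _]
  congr 1
  exact_mod_cast (Int.toNat_of_nonneg (by linarith)).symm

lemma sum_inv_le (N : ℕ) : ∑ m ∈ Finset.Icc 1 N, (1:ℝ)/m ≤ 1 + Real.log N := by
  have h := harmonic_le_one_add_log N
  rw [harmonic_eq_sum_Icc] at h
  calc ∑ m ∈ Finset.Icc 1 N, (1:ℝ)/m = ((∑ i ∈ Finset.Icc 1 N, (i:ℚ)⁻¹ : ℚ) : ℝ) := by
        push_cast; simp [one_div]
    _ ≤ 1 + Real.log N := h

lemma pow_sub_pow_le' {x y : ℝ} (hy : 0 ≤ y) (h : y ≤ x) (n : ℕ) :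
    x ^ n - y ^ n ≤ n * (x - y) * x ^ (n - 1) := by
  rw [← geom_sum₂_mul]
  have hs : (∑ i ∈ Finset.range n, x ^ i * y ^ (n - 1 - i)) ≤ n * x ^ (n-1) := by
    calc (∑ i ∈ Finset.range n, x ^ i * y ^ (n - 1 - i))
        ≤ ∑ _i ∈ Finset.range n, x ^ (n-1) := by
          refine Finset.sum_le_sum fun i hi => ?_
          have hx : 0 ≤ x := hy.trans h
          calc x ^ i * y ^ (n-1-i) ≤ x ^ i * x ^ (n-1-i) :=
                mul_le_mul_of_nonneg_left (pow_le_pow_left₀ hy h _) (pow_nonneg hx i)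
            _ = x ^ (n-1) := by
                rw [← pow_add]; congr 1
                have := Finset.mem_range.mp hi; omega
      _ = n * x ^ (n-1) := by rw [Finset.sum_const, Finset.card_range, nsmul_eq_mul]
  calc (∑ i ∈ Finset.range n, x ^ i * y ^ (n - 1 - i)) * (x - y)
      ≤ (n * x ^ (n-1)) * (x - y) := mul_le_mul_of_nonneg_right hs (by linarith)
    _ = n * (x - y) * x ^ (n-1) := by ring

/-- The box `[-N,N]^d` as a finset of `ℤ^d`. -/
def boxF (d N : ℕ) : Finset (Fin d → ℤ) := Fintype.piFinset fun _ => Finset.Icc (-(N:ℤ)) N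

lemma mem_boxF {d N : ℕ} {p : Fin d → ℤ} : p ∈ boxF d N ↔ ∀ i, |p i| ≤ (N:ℤ) := by
  simp [boxF, Fintype.mem_piFinset, abs_le]

lemma card_boxF (d N : ℕ) : (boxF d N).card = (2*N+1)^d := by
  have h : ((N:ℤ) + 1 - -(N:ℤ)).toNat = 2*N+1 := by omega
  rw [boxF, Fintype.card_piFinset]
  simp only [Int.card_Icc, Finset.prod_const, Finset.card_univ, Fintype.card_fin]
  rw [h]

lemma boxsum_le (d : ℕ) (hd : 1 ≤ d) (N : ℕ) :
    ∑ p ∈ boxF d N, (if 1 ≤ znorm p then 1 / znorm p ^ d else 0)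
      ≤ (2*d*3^(d-1) : ℝ) * ∑ m ∈ Finset.Icc 1 N, (1:ℝ)/m := by
  induction N with
  | zero =>
    have : ∀ p ∈ boxF d 0, (if 1 ≤ znorm p then 1 / znorm p ^ d else 0 : ℝ) = 0 := by
      intro p hp
      have hp0 : p = 0 := funext fun i => by
        have := mem_boxF.mp hp i
        simp only [Nat.cast_zero, abs_nonpos_iff] at this
        simpa using this
      rw [if_neg]
      rw [hp0]
      simp [znorm]
    rw [Finset.sum_congr rfl this]
    simp
  | succ N ih =>
    have hsub : boxF d N ⊆ boxF d (N+1) := by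
      intro p hp
      rw [mem_boxF] at hp ⊢
      intro i
      have := hp i
      push_cast
      omega
    rw [← Finset.sum_sdiff hsub, Finset.sum_Icc_succ_top (by omega), mul_add]
    have hshell : ∑ p ∈ boxF d (N+1) \ boxF d N,
        (if 1 ≤ znorm p then 1 / znorm p ^ d else 0 : ℝ)
        ≤ (2*d*3^(d-1) : ℝ) * (1/((N:ℝ)+1)) := by
      have hterm : ∀ p ∈ boxF d (N+1) \ boxF d N,
          (if 1 ≤ znorm p then 1 / znorm p ^ d else 0 : ℝ) ≤ 1 / ((N:ℝ)+1)^d := by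
        intro p hp
        obtain ⟨hp1, hp2⟩ := Finset.mem_sdiff.mp hp
        rw [mem_boxF] at hp2
        push_neg at hp2
        obtain ⟨i, hi⟩ := hp2
        have hzn : ((N:ℝ)+1) ≤ znorm p := by
          have h1 : ((N:ℝ)+1) ≤ |(p i : ℝ)| := by
            rw [← Int.cast_abs]
            exact_mod_cast by omega
          exact h1.trans (abs_le_znorm p i)
        have hN1 : (0:ℝ) < (N:ℝ)+1 := by positivity
        rw [if_pos (by linarith)]
        apply one_div_le_one_div_of_le (by positivity)
        exact pow_le_pow_left₀ (by positivity) hzn d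
      calc ∑ p ∈ boxF d (N+1) \ boxF d N, (if 1 ≤ znorm p then 1 / znorm p ^ d else 0 : ℝ)
          ≤ ((boxF d (N+1) \ boxF d N).card : ℝ) * (1 / ((N:ℝ)+1)^d) := by
            simpa using Finset.sum_le_card_nsmul _ _ _ hterm
        _ ≤ (2*d*3^(d-1)*((N:ℝ)+1)^(d-1)) * (1 / ((N:ℝ)+1)^d) := by
            apply mul_le_mul_of_nonneg_right _ (by positivity)
            rw [Finset.card_sdiff_of_subset hsub, card_boxF, card_boxF]
            have hle : (2*N+1)^d ≤ (2*(N+1)+1)^d := Nat.pow_le_pow_left (by omega) d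
            rw [Nat.cast_sub hle]
            push_cast
            have h2 := pow_sub_pow_le' (x := 2*(N:ℝ)+3) (y := 2*(N:ℝ)+1) (by positivity)
              (by linarith) d
            have h3 : (2*(N:ℝ)+3)^(d-1) ≤ 3^(d-1)*((N:ℝ)+1)^(d-1) := by
              rw [← mul_pow]
              exact pow_le_pow_left₀ (by positivity) (by linarith) _
            calc (2*((N:ℝ)+1)+1)^d - (2*(N:ℝ)+1)^d
                = (2*(N:ℝ)+3)^d - (2*(N:ℝ)+1)^d := by ring_nf
              _ ≤ (d:ℝ) * ((2*(N:ℝ)+3) - (2*(N:ℝ)+1)) * (2*(N:ℝ)+3)^(d-1) := h2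
              _ = 2*(d:ℝ) * (2*(N:ℝ)+3)^(d-1) := by ring
              _ ≤ 2*(d:ℝ) * (3^(d-1)*((N:ℝ)+1)^(d-1)) := by
                  apply mul_le_mul_of_nonneg_left h3 (by positivity)
              _ = 2*(d:ℝ)*3^(d-1)*((N:ℝ)+1)^(d-1) := by ring
        _ = (2*d*3^(d-1) : ℝ) * (1/((N:ℝ)+1)) := by
            have hN1 : (0:ℝ) < (N:ℝ)+1 := by positivity
            have hpow : ((N:ℝ)+1)^d = ((N:ℝ)+1)^(d-1) * ((N:ℝ)+1) := by
              rw [← pow_succ]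
              congr 1
              omega
            field_simp
            rw [hpow]
            ring
    push_cast
    have := add_le_add hshell ih
    linarith [this]

lemma core_ineq {d : ℕ} (hd : 1 ≤ d) {n : Fin d → ℤ} {lam α : ℝ}
    (hn1 : 1 ≤ znorm n) (hn2 : znorm n ≤ lam) :
    1 / (znorm (primPart n) * znorm n ^ α)
      ≤ lam ^ max ((d:ℝ)-1-α) 0 * (1 / (((Finset.univ.gcd n).toNat : ℕ) : ℝ)^(d-1)
          * (1 / znorm (primPart n) ^ d)) := by
  have hn0 : n ≠ 0 := by rintro rfl; rw [znorm_zero'] at hn1; linarith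
  obtain ⟨hg1, heq, hp0⟩ := gcd_facts hn0
  set g := Finset.univ.gcd n with hgdef
  set G : ℝ := (((g.toNat : ℕ)) : ℝ) with hGdef
  set P : ℝ := znorm (primPart n) with hPdef
  have hGg : G = (g : ℝ) := by
    rw [hGdef]
    exact_mod_cast Int.toNat_of_nonneg (show (0:ℤ) ≤ g by linarith)
  have hG1 : (1:ℝ) ≤ G := by rw [hGg]; exact_mod_cast hg1
  have hP1 : (1:ℝ) ≤ P := one_le_znorm hp0
  have hG0 : (0:ℝ) < G := by linarith
  have hP0 : (0:ℝ) < P := by linarith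
  have hGP0 : (0:ℝ) < G * P := by positivity
  have hnGP : znorm n = G * P := by rw [hGdef, hPdef, hgdef]; exact znorm_factor hn0
  have hGPlam : G * P ≤ lam := by rw [← hnGP]; exact hn2
  have hGP1 : (1:ℝ) ≤ G * P := by rw [← hnGP]; exact hn1
  set E := max ((d:ℝ)-1-α) 0 with hEdef
  have hkey : (G*P) ^ ((d:ℝ)-1-α) ≤ lam ^ E := by
    rcases le_or_gt 0 ((d:ℝ)-1-α) with h | h
    · rw [hEdef, max_eq_left h]
      exact Real.rpow_le_rpow (by positivity) hGPlam h
    · have h1 : (G*P) ^ ((d:ℝ)-1-α) ≤ (G*P) ^ (0:ℝ) :=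
        Real.rpow_le_rpow_of_exponent_le hGP1 h.le
      rw [hEdef, max_eq_right h.le, Real.rpow_zero]
      rw [Real.rpow_zero] at h1
      exact h1
  rw [hnGP]
  have hsplit : G^(d-1) * P^d = (G*P)^(d-1) * P := by
    rw [mul_pow, show P^d = P^(d-1)*P by rw [← pow_succ]; congr 1; omega]
    ring
  have key2 : (G*P)^(d-1) * P ≤ lam ^ E * (P * (G*P) ^ α) := by
    have e1 : (G*P)^(d-1) = (G*P) ^ ((d:ℝ)-1-α) * (G*P) ^ α := by
      rw [← Real.rpow_natCast (G*P) (d-1), ← Real.rpow_add hGP0]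
      congr 1
      rw [Nat.cast_sub hd]
      push_cast
      ring
    rw [e1]
    calc (G*P) ^ ((d:ℝ)-1-α) * (G*P) ^ α * P ≤ lam ^ E * (G*P) ^ α * P := by
          apply mul_le_mul_of_nonneg_right (mul_le_mul_of_nonneg_right hkey (by positivity))
            (by positivity)
      _ = lam ^ E * (P * (G*P) ^ α) := by ring
  have hrhs : lam ^ E * (1 / G^(d-1) * (1 / P^d)) = lam ^ E / (G^(d-1) * P^d) := by
    field_simp
  rw [hrhs, div_le_div_iff₀ (by positivity) (by positivity), one_mul, hsplit]
  exact key2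

/-- the arithmetic sum `∑ 1/(‖n̂‖ ‖n‖^α)` over the ball of radius `λ`. -/
theorem statement11 (d : ℕ) (hd : 2 ≤ d) (α : ℝ) (hα : 0 ≤ α) :
    ∃ C : ℝ, 0 < C ∧ ∀ lam : ℝ, 2 ≤ lam →
      (∑' n : Fin d → ℤ,
          if 1 ≤ znorm n ∧ znorm n ≤ lam then
            1 / (znorm (primPart n) * znorm n ^ α) else 0)
        ≤ C * Real.log lam ^ 2 * lam ^ max ((d : ℝ) - 1 - α) 0 := by
  classical
  have hd1 : 1 ≤ d := by omega
  have hd0 : (0:ℝ) < (d:ℝ) := by exact_mod_cast (by omega : 0 < d)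
  refine ⟨32 * (d:ℝ) * 3^(d-1), by positivity, ?_⟩
  intro lam hlam
  have hlam1 : (1:ℝ) ≤ lam := by linarith
  have hlam0 : (0:ℝ) < lam := by linarith
  set N := ⌈lam⌉₊ with hNdef
  have hlamN : lam ≤ (N:ℝ) := Nat.le_ceil lam
  have hNlam : (N:ℝ) ≤ 2 * lam := by
    have := Nat.ceil_lt_add_one (show (0:ℝ) ≤ lam by linarith)
    linarith
  set E := max ((d:ℝ)-1-α) 0 with hEdef
  have hlogtwo : (0.6931471803:ℝ) < Real.log 2 := Real.log_two_gt_d9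
  have hloglam : Real.log 2 ≤ Real.log lam := Real.log_le_log (by norm_num) hlam
  have hlogpos : (0:ℝ) < Real.log lam := by linarith
  have hlogN : Real.log N ≤ Real.log 2 + Real.log lam := by
    calc Real.log N ≤ Real.log (2*lam) := Real.log_le_log (by positivity) hNlam
      _ = Real.log 2 + Real.log lam := Real.log_mul (by norm_num) (by linarith)
  have hH : 1 + Real.log N ≤ 4 * Real.log lam := by linarith
  -- step 1 : the tsum is a finite sum over the box
  have hsupp : ∀ n : Fin d → ℤ, n ∉ boxF d N →
      (if 1 ≤ znorm n ∧ znorm n ≤ lam then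
        1 / (znorm (primPart n) * znorm n ^ α) else 0 : ℝ) = 0 := by
    intro n hn
    rw [if_neg]
    rintro ⟨h1, h2⟩
    apply hn
    rw [mem_boxF]
    intro i
    have h3 : |(n i : ℝ)| ≤ (N:ℝ) := (abs_le_znorm n i).trans (h2.trans hlamN)
    rw [← Int.cast_abs] at h3
    exact_mod_cast h3
  rw [tsum_eq_sum hsupp, ← Finset.sum_filter]
  set T := (boxF d N).filter (fun n => 1 ≤ znorm n ∧ znorm n ≤ lam) with hT
  set gf : ℕ × (Fin d → ℤ) → ℝ := fun q =>
    lam ^ E * (1 / (q.1:ℝ)^(d-1) * (if 1 ≤ znorm q.2 then 1 / znorm q.2 ^ d else 0)) with hgf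
  set if' : (Fin d → ℤ) → ℕ × (Fin d → ℤ) :=
    fun n => ((Finset.univ.gcd n).toNat, primPart n) with hif
  have hne : ∀ n ∈ T, n ≠ 0 := by
    intro n hn h0
    obtain ⟨-, h1, -⟩ := Finset.mem_filter.mp hn
    rw [h0, znorm_zero'] at h1
    linarith
  have hterm : ∀ n ∈ T, (1 / (znorm (primPart n) * znorm n ^ α) : ℝ) ≤ gf (if' n) := by
    intro n hn
    obtain ⟨-, h1, h2⟩ := Finset.mem_filter.mp hn
    have hp1 : 1 ≤ znorm (primPart n) := one_le_znorm (gcd_facts (hne n hn)).2.2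
    have hc := core_ineq hd1 h1 h2 (α := α)
    simpa [hgf, hif, if_pos hp1] using hc
  have hinj : ∀ a ∈ T, ∀ b ∈ T, if' a = if' b → a = b := by
    intro a ha b hb hab
    obtain ⟨hga, heqa, -⟩ := gcd_facts (hne a ha)
    obtain ⟨hgb, heqb, -⟩ := gcd_facts (hne b hb)
    have h1 : (Finset.univ.gcd a).toNat = (Finset.univ.gcd b).toNat :=
      congrArg Prod.fst hab
    have h2 : primPart a = primPart b := congrArg Prod.snd hab
    have hg' : Finset.univ.gcd a = Finset.univ.gcd b := by omega
    funext j
    rw [heqa j, heqb j, hg', h2]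
  have hmem : ∀ n ∈ T, if' n ∈ Finset.Icc 1 N ×ˢ boxF d N := by
    intro n hn
    obtain ⟨-, h1, h2⟩ := Finset.mem_filter.mp hn
    obtain ⟨hg1, heq, hp0⟩ := gcd_facts (hne n hn)
    have hp1 : (1:ℝ) ≤ znorm (primPart n) := one_le_znorm hp0
    have hfac := znorm_factor (hne n hn)
    have hG1 : (1:ℝ) ≤ (((Finset.univ.gcd n).toNat : ℕ) : ℝ) := by
      have : (1:ℤ) ≤ ((Finset.univ.gcd n).toNat : ℤ) := by omega
      exact_mod_cast this
    simp only [hif]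
    rw [Finset.mem_product]
    constructor
    · show (Finset.univ.gcd n).toNat ∈ Finset.Icc 1 N
      rw [Finset.mem_Icc]
      constructor
      · omega
      · have hGle : (((Finset.univ.gcd n).toNat : ℕ) : ℝ) ≤ (N:ℝ) := by
          calc (((Finset.univ.gcd n).toNat : ℕ) : ℝ)
              ≤ (((Finset.univ.gcd n).toNat : ℕ) : ℝ) * znorm (primPart n) :=
                le_mul_of_one_le_right (by linarith) hp1
            _ = znorm n := hfac.symm
            _ ≤ lam := h2
            _ ≤ (N:ℝ) := hlamN
        exact_mod_cast hGle
    · show primPart n ∈ boxF d N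
      rw [mem_boxF]
      intro i
      have hPle : znorm (primPart n) ≤ (N:ℝ) := by
        calc znorm (primPart n)
            ≤ (((Finset.univ.gcd n).toNat : ℕ) : ℝ) * znorm (primPart n) :=
              le_mul_of_one_le_left (by linarith) hG1
          _ = znorm n := hfac.symm
          _ ≤ (N:ℝ) := h2.trans hlamN
      have h3 : |(primPart n i : ℝ)| ≤ (N:ℝ) := (abs_le_znorm _ i).trans hPle
      rw [← Int.cast_abs] at h3
      exact_mod_cast h3
  have hchain : ∑ n ∈ T, (1 / (znorm (primPart n) * znorm n ^ α) : ℝ)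
      ≤ ∑ q ∈ Finset.Icc 1 N ×ˢ boxF d N, gf q := by
    calc ∑ n ∈ T, (1 / (znorm (primPart n) * znorm n ^ α) : ℝ)
        ≤ ∑ n ∈ T, gf (if' n) := Finset.sum_le_sum hterm
      _ = ∑ q ∈ T.image if', gf q := (Finset.sum_image hinj).symm
      _ ≤ ∑ q ∈ Finset.Icc 1 N ×ˢ boxF d N, gf q := by
          apply Finset.sum_le_sum_of_subset_of_nonneg
          · intro q hq
            obtain ⟨n, hn, rfl⟩ := Finset.mem_image.mp hq
            exact hmem n hn
          · intro q _ _
            have h0 : (0:ℝ) ≤ (if 1 ≤ znorm q.2 then 1 / znorm q.2 ^ d else 0) := by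
              split_ifs with h
              · positivity
              · exact le_refl 0
            show (0:ℝ) ≤ lam ^ E * (1 / (q.1:ℝ)^(d-1) * (if 1 ≤ znorm q.2 then 1 / znorm q.2 ^ d else 0))
            exact mul_nonneg (Real.rpow_pos_of_pos hlam0 E).le
              (mul_nonneg (by positivity) h0)
  have hprod : ∑ q ∈ Finset.Icc 1 N ×ˢ boxF d N, gf q
      = lam ^ E * ((∑ m ∈ Finset.Icc 1 N, 1/(m:ℝ)^(d-1))
          * (∑ p ∈ boxF d N, (if 1 ≤ znorm p then 1 / znorm p ^ d else 0 : ℝ))) := by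
    rw [Finset.sum_product, Finset.sum_mul_sum, Finset.mul_sum]
    refine Finset.sum_congr rfl fun m _ => ?_
    rw [Finset.mul_sum]
  set A := ∑ m ∈ Finset.Icc 1 N, 1/(m:ℝ)^(d-1) with hA
  set B := ∑ p ∈ boxF d N, (if 1 ≤ znorm p then 1 / znorm p ^ d else 0 : ℝ) with hB
  have hAle : A ≤ 4 * Real.log lam := by
    have h1 : A ≤ ∑ m ∈ Finset.Icc 1 N, (1:ℝ)/m := by
      apply Finset.sum_le_sum
      intro m hm
      have hm1 : (1:ℝ) ≤ (m:ℝ) := by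
        exact_mod_cast (Finset.mem_Icc.mp hm).1
      apply one_div_le_one_div_of_le (by linarith)
      exact le_self_pow₀ (by linarith) (by omega)
    linarith [sum_inv_le N]
  have hBnn : (0:ℝ) ≤ B := by
    apply Finset.sum_nonneg
    intro p _
    split_ifs with h
    · positivity
    · exact le_refl 0
  have hBle : B ≤ 2*(d:ℝ)*3^(d-1) * (4 * Real.log lam) := by
    calc B ≤ (2*d*3^(d-1) : ℝ) * ∑ m ∈ Finset.Icc 1 N, (1:ℝ)/m := boxsum_le d hd1 N
      _ ≤ (2*d*3^(d-1) : ℝ) * (1 + Real.log N) := by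
          apply mul_le_mul_of_nonneg_left (sum_inv_le N) (by positivity)
      _ ≤ 2*(d:ℝ)*3^(d-1) * (4 * Real.log lam) := by
          apply mul_le_mul_of_nonneg_left hH (by positivity)
  have hE0 : (0:ℝ) < lam ^ E := Real.rpow_pos_of_pos hlam0 E
  calc ∑ n ∈ T, (1 / (znorm (primPart n) * znorm n ^ α) : ℝ)
      ≤ lam ^ E * (A * B) := by rw [← hprod]; exact hchain
    _ ≤ lam ^ E * ((4 * Real.log lam) * (2*(d:ℝ)*3^(d-1) * (4 * Real.log lam))) := by
        apply mul_le_mul_of_nonneg_left _ hE0.le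
        exact mul_le_mul hAle hBle hBnn (by positivity)
    _ = 32 * (d:ℝ) * 3^(d-1) * Real.log lam ^ 2 * lam ^ E := by ring
end
end
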